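/- Combined stability criterion: for λ ∈ ℝ and A = λ·id + E on ℓ², the system ẏ = Ay is globally asymptotically stable (e^{tA} y₀ → 0 as t → +∞ for every y₀ ∈ ℓ²) if and only if λ ≤ -1. -/

import Mathlib

open scoped ENNReal
open MeasureTheory Filter

noncomputable section

/-- The real Hilbert space `ℓ²` of square-summable real sequences. -/
abbrev ell2 : Type := lp (fun _ : ℕ => ℝ) 2

lemma shift_memℓp (y : ell2) : Memℓp (fun n => y (n + 1)) 2 := by
  have h : Summable fun n : ℕ => ‖y n‖ ^ (2 : ℝ≥0∞).toReal :=
    (memℓp_gen_iff (by norm_num)).mp (lp.memℓp y)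
  exact memℓp_gen (h.comp_injective (add_left_injective 1))

/-- The left shift operator `E : ℓ² → ℓ²`, `(Ey)ₙ = yₙ₊₁`. -/
def shiftE : ell2 →L[ℝ] ell2 :=
  LinearMap.mkContinuous
    { toFun := fun y => ⟨fun n => y (n + 1), shift_memℓp y⟩
      map_add' := fun y z => by
        ext n
        simp [lp.coeFn_add]
        rfl
      map_smul' := fun c y => by
        ext n
        simp [lp.coeFn_smul] }
    1
    (fun y => by
      rw [one_mul]
      have h2 : (0:ℝ) < (2 : ℝ≥0∞).toReal := by norm_num
      have hy := lp.norm_rpow_eq_tsum h2 y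
      have hEy := lp.norm_rpow_eq_tsum h2 (⟨fun n => y (n + 1), shift_memℓp y⟩ : ell2)
      have hle : (∑' n : ℕ, ‖y (n + 1)‖ ^ (2 : ℝ≥0∞).toReal)
          ≤ ∑' n : ℕ, ‖y n‖ ^ (2 : ℝ≥0∞).toReal := by
        have hs : Summable fun n : ℕ => ‖y n‖ ^ (2 : ℝ≥0∞).toReal :=
          (memℓp_gen_iff h2).mp (lp.memℓp y)
        exact tsum_comp_le_tsum_of_inj hs (fun n => by positivity)
          (add_left_injective 1)
      have key : ‖(⟨fun n => y (n + 1), shift_memℓp y⟩ : ell2)‖ ^ (2 : ℝ≥0∞).toReal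
          ≤ ‖y‖ ^ (2 : ℝ≥0∞).toReal := by
        rw [hy, hEy]; exact hle
      exact (Real.rpow_le_rpow_iff
        (norm_nonneg ((⟨fun n => y (n + 1), shift_memℓp y⟩ : ell2))) (norm_nonneg y) h2).mp key)

/-- The operator `A = λ·id + E` on `ℓ²`. -/
def opA (lam : ℝ) : ell2 →L[ℝ] ell2 :=
  lam • ContinuousLinearMap.id ℝ ell2 + shiftE

-- AUX LEMMAS
open Nat

set_option synthInstance.maxHeartbeats 1000000
set_option maxHeartbeats 1000000

lemma shiftE_apply (y : ell2) (n : ℕ) : shiftE y n = y (n + 1) := rfl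

lemma shiftE_norm_le : ‖shiftE‖ ≤ 1 :=
  LinearMap.mkContinuous_norm_le _ zero_le_one _

lemma pow_apply_norm_le (T : ell2 →L[ℝ] ell2) (n : ℕ) (y : ell2) :
    ‖(T ^ n) y‖ ≤ ‖T‖ ^ n * ‖y‖ := by
  induction n generalizing y with
  | zero => simp
  | succ n ih =>
    rw [pow_succ, ContinuousLinearMap.mul_apply]
    calc ‖(T ^ n) (T y)‖ ≤ ‖T‖ ^ n * ‖T y‖ := ih (T y)
      _ ≤ ‖T‖ ^ n * (‖T‖ * ‖y‖) := by
          exact mul_le_mul_of_nonneg_left (T.le_opNorm y) (by positivity)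
      _ = ‖T‖ ^ (n + 1) * ‖y‖ := by ring

lemma shiftE_pow_apply (k : ℕ) (y : ell2) (n : ℕ) :
    ((shiftE ^ k) y) n = y (n + k) := by
  induction k generalizing y with
  | zero => simp
  | succ k ih =>
    rw [pow_succ, ContinuousLinearMap.mul_apply, ih (shiftE y), shiftE_apply, Nat.add_assoc]

lemma exp_apply_eq_tsum (T : ell2 →L[ℝ] ell2) (y : ell2) :
    NormedSpace.exp T y = ∑' n : ℕ, (n !⁻¹ : ℝ) • (T ^ n) y := by
  have hs : Summable fun n : ℕ => (n !⁻¹ : ℝ) • T ^ n :=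
    NormedSpace.expSeries_summable' T
  rw [NormedSpace.exp_eq_tsum ℝ]
  have := (ContinuousLinearMap.apply ℝ ell2 y).map_tsum hs
  simpa using this

lemma exp_apply_eigen (T : ell2 →L[ℝ] ell2) (c : ℝ) (y : ell2) (h : T y = c • y) :
    NormedSpace.exp T y = Real.exp c • y := by
  have hpow : ∀ n : ℕ, (T ^ n) y = c ^ n • y := by
    intro n
    induction n with
    | zero => simp
    | succ n ih =>
      rw [pow_succ, ContinuousLinearMap.mul_apply, h, _root_.map_smul, ih,
        smul_smul, pow_succ]
      ring_nf
  have hsum : Summable fun n : ℕ => (n !⁻¹ : ℝ) * c ^ n := by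
    have := NormedSpace.expSeries_summable' (𝕂 := ℝ) (𝔸 := ℝ) c
    simpa [smul_eq_mul] using this
  rw [exp_apply_eq_tsum]
  calc (∑' n : ℕ, (n !⁻¹ : ℝ) • (T ^ n) y)
      = ∑' n : ℕ, ((n !⁻¹ : ℝ) * c ^ n) • y := by
        refine tsum_congr fun n => ?_
        rw [hpow n, smul_smul]
    _ = (∑' n : ℕ, (n !⁻¹ : ℝ) * c ^ n) • y := hsum.tsum_smul_const y
    _ = Real.exp c • y := by
        congr 1
        rw [Real.exp_eq_exp_ℝ, NormedSpace.exp_eq_tsum ℝ]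
        simp [smul_eq_mul]

lemma exp_apply_of_pow_eq_zero (T : ell2 →L[ℝ] ell2) (y : ell2) (N : ℕ)
    (h : (T ^ N) y = 0) :
    NormedSpace.exp T y = ∑ k ∈ Finset.range N, (k !⁻¹ : ℝ) • (T ^ k) y := by
  rw [exp_apply_eq_tsum]
  refine tsum_eq_sum ?_
  intro k hk
  have hk' : N ≤ k := by
    by_contra hlt
    exact hk (Finset.mem_range.mpr (lt_of_not_ge hlt))
  obtain ⟨m, rfl⟩ := Nat.exists_eq_add_of_le' hk'
  rw [pow_add, ContinuousLinearMap.mul_apply, h, map_zero, smul_zero]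

lemma exp_opA_eq (lam t : ℝ) :
    NormedSpace.exp (t • opA lam)
      = Real.exp (t * lam) • NormedSpace.exp (t • shiftE) := by
  have h1 : t • opA lam = (t * lam) • (1 : ell2 →L[ℝ] ell2) + t • shiftE := by
    rw [opA, smul_add, smul_smul, ContinuousLinearMap.one_def]
  have hcomm : Commute ((t * lam) • (1 : ell2 →L[ℝ] ell2)) (t • shiftE) :=
    ((Commute.one_left (t • shiftE)).smul_left (t * lam))
  rw [h1, NormedSpace.exp_add_of_commute_of_mem_ball (𝕂 := ℝ) hcomm
    ((NormedSpace.expSeries_radius_eq_top ℝ (ell2 →L[ℝ] ell2)).symm ▸ edist_lt_top _ _)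
    ((NormedSpace.expSeries_radius_eq_top ℝ (ell2 →L[ℝ] ell2)).symm ▸ edist_lt_top _ _)]
  have h2 : NormedSpace.exp ((t * lam) • (1 : ell2 →L[ℝ] ell2))
      = Real.exp (t * lam) • (1 : ell2 →L[ℝ] ell2) := by
    have halg : (t * lam) • (1 : ell2 →L[ℝ] ell2)
        = algebraMap ℝ (ell2 →L[ℝ] ell2) (t * lam) :=
      (Algebra.algebraMap_eq_smul_one _).symm
    rw [halg, ← NormedSpace.algebraMap_exp_comm, ← Real.exp_eq_exp_ℝ,
      Algebra.algebraMap_eq_smul_one]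
  rw [h2, smul_mul_assoc, one_mul]

lemma norm_exp_apply_le (T : ell2 →L[ℝ] ell2) (y : ell2) :
    ‖NormedSpace.exp T y‖ ≤ Real.exp ‖T‖ * ‖y‖ := by
  rw [exp_apply_eq_tsum]
  have hmaj : Summable fun n : ℕ => ‖T‖ ^ n / n ! * ‖y‖ :=
    (Real.summable_pow_div_factorial ‖T‖).mul_right ‖y‖
  have hterm : ∀ n : ℕ, ‖(n !⁻¹ : ℝ) • (T ^ n) y‖ ≤ ‖T‖ ^ n / n ! * ‖y‖ := by
    intro n
    rw [norm_smul, Real.norm_eq_abs, abs_of_nonneg (by positivity)]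
    calc (n !⁻¹ : ℝ) * ‖(T ^ n) y‖ ≤ (n !⁻¹ : ℝ) * (‖T‖ ^ n * ‖y‖) :=
          mul_le_mul_of_nonneg_left (pow_apply_norm_le T n y) (by positivity)
      _ = ‖T‖ ^ n / n ! * ‖y‖ := by ring
  have hsum : Summable fun n : ℕ => ‖(n !⁻¹ : ℝ) • (T ^ n) y‖ :=
    Summable.of_nonneg_of_le (fun n => norm_nonneg _) hterm hmaj
  calc ‖∑' n : ℕ, (n !⁻¹ : ℝ) • (T ^ n) y‖
      ≤ ∑' n : ℕ, ‖(n !⁻¹ : ℝ) • (T ^ n) y‖ := norm_tsum_le_tsum_norm hsum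
    _ ≤ ∑' n : ℕ, ‖T‖ ^ n / n ! * ‖y‖ := Summable.tsum_le_tsum hterm hsum hmaj
    _ = (∑' n : ℕ, ‖T‖ ^ n / n !) * ‖y‖ := by rw [tsum_mul_right]
    _ = Real.exp ‖T‖ * ‖y‖ := by
        congr 1
        rw [Real.exp_eq_exp_ℝ, NormedSpace.exp_eq_tsum_div]

/-- Stability criterion: the system `ẏ = Ay`, `A = λ·id + E` on `ℓ²`, is globally
asymptotically stable if and only if `λ ≤ -1`. -/
theorem stmt8 (lam : ℝ) :
    (∀ y0 : ell2, Tendsto (fun t : ℝ => NormedSpace.exp (t • opA lam) y0)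
      atTop (nhds 0)) ↔ lam ≤ -1 := by
  constructor
  · intro hstab
    by_contra hlt
    push_neg at hlt
    set μ : ℝ := max (-lam) 0 with hμdef
    have hμ0 : 0 ≤ μ := le_max_right _ _
    have hμ1 : μ < 1 := max_lt (by linarith) one_pos
    have hμlam : 0 ≤ lam + μ := by
      have := le_max_left (-lam) 0
      linarith
    have hsum : Summable fun n : ℕ => ‖μ ^ n‖ ^ (2 : ℝ≥0∞).toReal := by
      have heq : ∀ n : ℕ, ‖μ ^ n‖ ^ (2 : ℝ≥0∞).toReal = (μ ^ 2) ^ n := by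
        intro n
        rw [Real.norm_eq_abs, abs_of_nonneg (pow_nonneg hμ0 n),
          show (2 : ℝ≥0∞).toReal = ((2 : ℕ) : ℝ) by norm_num, Real.rpow_natCast]
        ring
      rw [funext heq]
      exact summable_geometric_of_lt_one (by positivity) (by nlinarith)
    set y : ell2 := ⟨fun n => μ ^ n, memℓp_gen hsum⟩ with hy
    have hcoe : ∀ n : ℕ, y n = μ ^ n := fun n => rfl
    have heig : shiftE y = μ • y := by
      ext n
      rw [shiftE_apply, lp.coeFn_smul, Pi.smul_apply, hcoe, hcoe, smul_eq_mul,
        pow_succ]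
      ring
    have hA : ∀ t : ℝ, (t • opA lam) y = (t * (lam + μ)) • y := by
      intro t
      rw [ContinuousLinearMap.smul_apply, opA, ContinuousLinearMap.add_apply,
        ContinuousLinearMap.smul_apply, ContinuousLinearMap.id_apply, heig,
        ← add_smul, smul_smul]
    have hexp : ∀ t : ℝ,
        NormedSpace.exp (t • opA lam) y = Real.exp (t * (lam + μ)) • y :=
      fun t => exp_apply_eigen _ _ _ (hA t)
    have hyne : y ≠ 0 := by
      intro h0
      have h1 : y 0 = 0 := by rw [h0]; simp
      rw [hcoe 0, pow_zero] at h1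
      exact one_ne_zero h1
    have hypos : 0 < ‖y‖ := norm_pos_iff.mpr hyne
    have hnorm : Tendsto (fun t : ℝ => ‖NormedSpace.exp (t • opA lam) y‖)
        atTop (nhds 0) := by
      simpa using (hstab y).norm
    have hev : ∀ᶠ t : ℝ in atTop,
        ‖NormedSpace.exp (t • opA lam) y‖ < ‖y‖ :=
      hnorm.eventually_lt_const hypos
    obtain ⟨t, ht0, htlt⟩ := ((eventually_ge_atTop (0 : ℝ)).and hev).exists
    rw [hexp t, norm_smul, Real.norm_eq_abs,
      abs_of_pos (Real.exp_pos _)] at htlt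
    have hge : 1 ≤ Real.exp (t * (lam + μ)) :=
      Real.one_le_exp (by positivity)
    nlinarith
  · intro hlam y0
    have hcontr : ∀ t : ℝ, 0 ≤ t → ∀ w : ell2,
        ‖NormedSpace.exp (t • opA lam) w‖ ≤ ‖w‖ := by
      intro t ht w
      rw [exp_opA_eq, ContinuousLinearMap.smul_apply, norm_smul,
        Real.norm_eq_abs, abs_of_pos (Real.exp_pos _)]
      have h2 : ‖t • shiftE‖ ≤ t := by
        refine ContinuousLinearMap.opNorm_le_bound _ ht fun x => ?_
        rw [ContinuousLinearMap.smul_apply, norm_smul, Real.norm_eq_abs,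
          abs_of_nonneg ht]
        have h3 : ‖shiftE x‖ ≤ ‖x‖ := by
          refine (shiftE.le_opNorm x).trans ?_
          nlinarith [norm_nonneg x, shiftE_norm_le]
        exact mul_le_mul_of_nonneg_left h3 ht
      calc Real.exp (t * lam) * ‖NormedSpace.exp (t • shiftE) w‖
          ≤ Real.exp (t * lam) * (Real.exp t * ‖w‖) := by
            refine mul_le_mul_of_nonneg_left ?_ (Real.exp_pos _).le
            refine (norm_exp_apply_le _ _).trans ?_
            exact mul_le_mul_of_nonneg_right (Real.exp_le_exp.mpr h2)
              (norm_nonneg _)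
        _ = Real.exp (t * lam + t) * ‖w‖ := by rw [Real.exp_add]; ring
        _ ≤ 1 * ‖w‖ := by
            refine mul_le_mul_of_nonneg_right ?_ (norm_nonneg _)
            rw [← Real.exp_zero]
            exact Real.exp_le_exp.mpr (by nlinarith)
        _ = ‖w‖ := one_mul _
    have hfin : ∀ (z : ell2) (N : ℕ), (shiftE ^ N) z = 0 →
        Tendsto (fun t : ℝ => ‖NormedSpace.exp (t • opA lam) z‖)
          atTop (nhds 0) := by
      intro z N hz
      have hbound : ∀ t : ℝ, 0 ≤ t →
          ‖NormedSpace.exp (t • opA lam) z‖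
            ≤ ∑ k ∈ Finset.range N, Real.exp (-t) * t ^ k / k ! * ‖z‖ := by
        intro t ht
        rw [exp_opA_eq, ContinuousLinearMap.smul_apply, norm_smul,
          Real.norm_eq_abs, abs_of_pos (Real.exp_pos _)]
        have hz' : ((t • shiftE) ^ N) z = 0 := by
          rw [smul_pow, ContinuousLinearMap.smul_apply, hz, smul_zero]
        rw [exp_apply_of_pow_eq_zero _ _ N hz']
        have hterm : ∀ k : ℕ,
            ‖(k !⁻¹ : ℝ) • ((t • shiftE) ^ k) z‖ ≤ t ^ k / k ! * ‖z‖ := by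
          intro k
          rw [norm_smul, Real.norm_eq_abs, abs_of_nonneg (by positivity),
            smul_pow, ContinuousLinearMap.smul_apply, norm_smul,
            Real.norm_eq_abs, abs_of_nonneg (pow_nonneg ht k)]
          have h3 : ‖(shiftE ^ k) z‖ ≤ ‖z‖ := by
            refine (pow_apply_norm_le shiftE k z).trans ?_
            have : ‖shiftE‖ ^ k ≤ 1 :=
              pow_le_one₀ (norm_nonneg _) shiftE_norm_le
            nlinarith [norm_nonneg z, norm_nonneg ((shiftE ^ k) z)]
          calc (k !⁻¹ : ℝ) * (t ^ k * ‖(shiftE ^ k) z‖)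
              ≤ (k !⁻¹ : ℝ) * (t ^ k * ‖z‖) := by
                refine mul_le_mul_of_nonneg_left ?_ (by positivity)
                exact mul_le_mul_of_nonneg_left h3 (pow_nonneg ht k)
            _ = t ^ k / k ! * ‖z‖ := by ring
        calc Real.exp (t * lam)
              * ‖∑ k ∈ Finset.range N, (k !⁻¹ : ℝ) • ((t • shiftE) ^ k) z‖
            ≤ Real.exp (-t)
              * ∑ k ∈ Finset.range N, t ^ k / k ! * ‖z‖ := by
              refine mul_le_mul ?_ ?_ (norm_nonneg _) (Real.exp_pos _).le
              · exact Real.exp_le_exp.mpr (by nlinarith)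
              · exact (norm_sum_le _ _).trans
                  (Finset.sum_le_sum fun k _ => hterm k)
          _ = ∑ k ∈ Finset.range N, Real.exp (-t) * t ^ k / k ! * ‖z‖ := by
              rw [Finset.mul_sum]
              refine Finset.sum_congr rfl fun k _ => ?_
              ring
      have htermt : ∀ k : ℕ,
          Tendsto (fun t : ℝ => Real.exp (-t) * t ^ k / k ! * ‖z‖)
            atTop (nhds 0) := by
        intro k
        have h := (Real.tendsto_pow_mul_exp_neg_atTop_nhds_zero k).mul_const
          ((k ! : ℝ)⁻¹ * ‖z‖)
        rw [zero_mul] at h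
        refine h.congr fun t => ?_
        ring
      have hsumtend : Tendsto
          (fun t : ℝ => ∑ k ∈ Finset.range N,
            Real.exp (-t) * t ^ k / k ! * ‖z‖) atTop (nhds 0) := by
        have := tendsto_finset_sum (Finset.range N) fun k _ => htermt k
        simpa using this
      exact squeeze_zero' (eventually_atTop.2 ⟨0, fun t _ => norm_nonneg _⟩)
        (eventually_atTop.2 ⟨0, fun t ht => hbound t ht⟩) hsumtend
    rw [Metric.tendsto_atTop]
    intro ε hε
    have hsummy : Summable fun n : ℕ => ‖y0 n‖ ^ (2 : ℝ≥0∞).toReal :=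
      (memℓp_gen_iff (by norm_num)).mp (lp.memℓp y0)
    have htail := tendsto_sum_nat_add fun n : ℕ => ‖y0 n‖ ^ (2 : ℝ≥0∞).toReal
    have hεp : 0 < (ε / 2) ^ (2 : ℝ≥0∞).toReal :=
      Real.rpow_pos_of_pos (by linarith) _
    obtain ⟨N, hN⟩ := (htail.eventually_lt_const hεp).exists
    set zf : ℕ → ℝ := fun n => if n < N then y0 n else 0 with hzf
    have hzmem : Memℓp zf 2 := by
      refine memℓp_gen ?_
      refine summable_of_ne_finset_zero (s := Finset.range N) fun n hn => ?_
      have : zf n = 0 := if_neg fun h => hn (Finset.mem_range.mpr h)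
      rw [this, norm_zero, Real.zero_rpow (by norm_num)]
    set z : ell2 := ⟨zf, hzmem⟩ with hzdef
    have hzcoe : ∀ n : ℕ, z n = zf n := fun n => rfl
    have hzN : (shiftE ^ N) z = 0 := by
      ext n
      rw [shiftE_pow_apply, hzcoe]
      have : ¬(n + N < N) := by omega
      simp [hzf, this]
    have hsub : ∀ n : ℕ, (y0 - z) n = if n < N then 0 else y0 n := by
      intro n
      rw [lp.coeFn_sub, Pi.sub_apply, hzcoe, hzf]
      by_cases h : n < N <;> simp [h]
    have hsq : Summable fun n : ℕ => ‖(y0 - z) n‖ ^ (2 : ℝ≥0∞).toReal :=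
      (memℓp_gen_iff (by norm_num)).mp (lp.memℓp (y0 - z))
    have hnormsub : ‖y0 - z‖ ^ (2 : ℝ≥0∞).toReal
        = ∑' n : ℕ, ‖y0 (n + N)‖ ^ (2 : ℝ≥0∞).toReal := by
      rw [lp.norm_rpow_eq_tsum (by norm_num) (y0 - z)]
      calc (∑' n : ℕ, ‖(y0 - z) n‖ ^ (2 : ℝ≥0∞).toReal)
          = ∑ i ∈ Finset.range N, ‖(y0 - z) i‖ ^ (2 : ℝ≥0∞).toReal
            + ∑' n : ℕ, ‖(y0 - z) (n + N)‖ ^ (2 : ℝ≥0∞).toReal :=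
            (Summable.sum_add_tsum_nat_add N hsq).symm
        _ = ∑' n : ℕ, ‖y0 (n + N)‖ ^ (2 : ℝ≥0∞).toReal := by
            have h1 : ∑ i ∈ Finset.range N,
                ‖(y0 - z) i‖ ^ (2 : ℝ≥0∞).toReal = 0 := by
              refine Finset.sum_eq_zero fun i hi => ?_
              rw [hsub i, if_pos (Finset.mem_range.mp hi), norm_zero,
                Real.zero_rpow (by norm_num)]
            rw [h1, zero_add]
            refine tsum_congr fun n => ?_
            rw [hsub (n + N), if_neg (by omega)]
    have hN' : ‖y0 - z‖ ^ (2 : ℝ≥0∞).toReal < (ε / 2) ^ (2 : ℝ≥0∞).toReal := by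
      rw [hnormsub]
      exact hN
    have hsubnorm : ‖y0 - z‖ < ε / 2 :=
      (Real.rpow_lt_rpow_iff (norm_nonneg _) (by linarith) (by norm_num)).mp hN'
    obtain ⟨T₁, hT₁⟩ := Metric.tendsto_atTop.mp (hfin z N hzN) (ε / 2)
      (by linarith)
    refine ⟨max T₁ 0, fun t ht => ?_⟩
    have ht1 : T₁ ≤ t := le_trans (le_max_left _ _) ht
    have ht0 : (0 : ℝ) ≤ t := le_trans (le_max_right _ _) ht
    rw [_root_.dist_zero_right]
    have hsplit : NormedSpace.exp (t • opA lam) y0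
        = NormedSpace.exp (t • opA lam) (y0 - z)
          + NormedSpace.exp (t • opA lam) z := by
      rw [← map_add, sub_add_cancel]
    have hz2 : ‖NormedSpace.exp (t • opA lam) z‖ < ε / 2 := by
      have := hT₁ t ht1
      rwa [_root_.dist_zero_right, Real.norm_eq_abs, abs_of_nonneg (norm_nonneg _)]
        at this
    calc ‖NormedSpace.exp (t • opA lam) y0‖
        ≤ ‖NormedSpace.exp (t • opA lam) (y0 - z)‖
          + ‖NormedSpace.exp (t • opA lam) z‖ := by
          rw [hsplit]; exact norm_add_le _ _
      _ ≤ ‖y0 - z‖ + ‖NormedSpace.exp (t • opA lam) z‖ := by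
          exact add_le_add_left (hcontr t ht0 (y0 - z)) _
      _ < ε / 2 + ε / 2 := add_lt_add hsubnorm hz2
      _ = ε := by ring


end
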